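/- Let n ≥ 2. Let P ≤ SL_n(ℝ) be the subgroup of upper triangular matrices (matrices in SL_n(ℝ) whose entries below the diagonal vanish), and let Λ ≤ SL_n(ℤ) be the subgroup of upper triangular matrices in SL_n(ℤ). Equip the coset space SL_n(ℝ)/P with the quotient topology, on which SL_n(ℤ) acts by left multiplication via the inclusion SL_n(ℤ) ⊆ SL_n(ℝ). Then every Λ-invariant Borel probability measure on SL_n(ℝ)/P is the Dirac measure at the identity coset [P]. -/

import Mathlib

open Matrix

theorem diag_mul_of_upperTriangular {n : ℕ} {R : Type} [CommRing R]
    (U V : Matrix (Fin n) (Fin n) R) (hU : ∀ i j : Fin n, j < i → U i j = 0)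
    (hV : ∀ i j : Fin n, j < i → V i j = 0) (i : Fin n) :
    (U * V) i i = U i i * V i i := by
  rw [Matrix.mul_apply]
  apply Finset.sum_eq_single i
  · intro k _ hk
    rcases Ne.lt_or_gt hk with h | h
    · rw [hU i k h, zero_mul]
    · rw [hV k i h, mul_zero]
  · intro h
    exact absurd (Finset.mem_univ i) h

/-- The subgroup `P` of upper triangular matrices in `SL_n(R)` (matrices whose entries below
the diagonal vanish). -/
def upperTriangularSubgroup (n : ℕ) (R : Type) [CommRing R] :
    Subgroup (SpecialLinearGroup (Fin n) R) where
  carrier := {A | ∀ i j : Fin n, j < i → (A : Matrix (Fin n) (Fin n) R) i j = 0}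
  one_mem' := fun i j hij => Matrix.blockTriangular_one (b := (id : Fin n → Fin n)) hij
  mul_mem' := by
    intro A B hA hB i j hij
    have h : Matrix.BlockTriangular
        ((A : Matrix (Fin n) (Fin n) R) * (B : Matrix (Fin n) (Fin n) R)) id :=
      Matrix.BlockTriangular.mul (fun i j h => hA i j h) (fun i j h => hB i j h)
    have := h (show (id : Fin n → Fin n) j < id i from hij)
    simpa [Matrix.SpecialLinearGroup.coe_mul] using this
  inv_mem' := by
    intro A hA i j hij
    have hdet : IsUnit (A : Matrix (Fin n) (Fin n) R).det := by simp [A.prop]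
    have hinv : Invertible (A : Matrix (Fin n) (Fin n) R) :=
      (A : Matrix (Fin n) (Fin n) R).invertibleOfIsUnitDet hdet
    have h : Matrix.BlockTriangular ((A : Matrix (Fin n) (Fin n) R))⁻¹ id :=
      Matrix.blockTriangular_inv_of_blockTriangular (fun i j h => hA i j h)
    have hcoe : ((A⁻¹ : SpecialLinearGroup (Fin n) R) : Matrix (Fin n) (Fin n) R) =
        ((A : Matrix (Fin n) (Fin n) R))⁻¹ := by
      rw [Matrix.SpecialLinearGroup.coe_inv, Matrix.inv_def]
      simp [A.prop]
    rw [hcoe]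
    exact h hij

theorem inv_coe_eq_inv {n : ℕ} {R : Type} [CommRing R] (A : SpecialLinearGroup (Fin n) R) :
    ((A⁻¹ : SpecialLinearGroup (Fin n) R) : Matrix (Fin n) (Fin n) R) =
      ((A : Matrix (Fin n) (Fin n) R))⁻¹ := by
  rw [Matrix.SpecialLinearGroup.coe_inv, Matrix.inv_def]
  simp [A.prop]

/-- The subgroup `N` of upper unitriangular matrices in `SL_n(R)` (upper triangular matrices
with all diagonal entries equal to `1`). -/
def unitriangularSubgroup (n : ℕ) (R : Type) [CommRing R] :
    Subgroup (SpecialLinearGroup (Fin n) R) where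
  carrier := {A | (∀ i j : Fin n, j < i → (A : Matrix (Fin n) (Fin n) R) i j = 0) ∧
    ∀ i : Fin n, (A : Matrix (Fin n) (Fin n) R) i i = 1}
  one_mem' := ⟨fun i j hij => Matrix.blockTriangular_one (b := (id : Fin n → Fin n)) hij,
    fun i => by simp [Matrix.SpecialLinearGroup.coe_one]⟩
  mul_mem' := by
    rintro A B ⟨hA, hA1⟩ ⟨hB, hB1⟩
    refine ⟨fun i j hij => (upperTriangularSubgroup n R).mul_mem' hA hB i j hij, fun i => ?_⟩
    rw [Matrix.SpecialLinearGroup.coe_mul, diag_mul_of_upperTriangular _ _ hA hB, hA1, hB1,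
      one_mul]
  inv_mem' := by
    rintro A ⟨hA, hA1⟩
    have hAinv : ∀ i j : Fin n, j < i →
        ((A⁻¹ : SpecialLinearGroup (Fin n) R) : Matrix (Fin n) (Fin n) R) i j = 0 :=
      (upperTriangularSubgroup n R).inv_mem' hA
    refine ⟨hAinv, fun i => ?_⟩
    have hone : ((A : Matrix (Fin n) (Fin n) R) *
        ((A⁻¹ : SpecialLinearGroup (Fin n) R) : Matrix (Fin n) (Fin n) R)) = 1 := by
      rw [← Matrix.SpecialLinearGroup.coe_mul, mul_inv_cancel,
        Matrix.SpecialLinearGroup.coe_one]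
    have := diag_mul_of_upperTriangular _ _ hA hAinv i
    rw [hone, hA1, one_mul] at this
    simpa using this.symm

noncomputable instance (n : ℕ) : TopologicalSpace (SpecialLinearGroup (Fin n) ℝ) :=
  instTopologicalSpaceSubtype

noncomputable instance (n : ℕ) :
    MeasurableSpace (SpecialLinearGroup (Fin n) ℝ ⧸ upperTriangularSubgroup n ℝ) :=
  borel _

instance (n : ℕ) :
    BorelSpace (SpecialLinearGroup (Fin n) ℝ ⧸ upperTriangularSubgroup n ℝ) :=
  ⟨rfl⟩

/-- The inclusion `SL_n(ℤ) → SL_n(ℝ)`. -/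
noncomputable def slZtoR (n : ℕ) :
    SpecialLinearGroup (Fin n) ℤ →* SpecialLinearGroup (Fin n) ℝ :=
  SpecialLinearGroup.map (Int.castRingHom ℝ)

namespace SLP
variable {n m : ℕ}

lemma dp_self_nonneg {k : ℕ} (v : Fin k → ℝ) : 0 ≤ v ⬝ᵥ v :=
  Finset.sum_nonneg fun i _ => mul_self_nonneg (v i)

def gram (C : Matrix (Fin n) (Fin m) ℝ) : Matrix (Fin m) (Fin m) ℝ := Cᵀ * C

noncomputable def proj (C : Matrix (Fin n) (Fin m) ℝ) : Matrix (Fin n) (Fin n) ℝ := C * (gram C)⁻¹ * Cᵀ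

def FullRank (C : Matrix (Fin n) (Fin m) ℝ) : Prop := ∀ x, C *ᵥ x = 0 → x = 0

lemma gram_det_ne_zero {C : Matrix (Fin n) (Fin m) ℝ} (hC : FullRank C) :
    (gram C).det ≠ 0 := by
  intro h
  obtain ⟨v, hv, hv0⟩ := (Matrix.exists_mulVec_eq_zero_iff).2 h
  apply hv
  apply hC
  have h1 : v ⬝ᵥ (gram C *ᵥ v) = (C *ᵥ v) ⬝ᵥ (C *ᵥ v) := by
    rw [gram, ← Matrix.mulVec_mulVec, Matrix.dotProduct_mulVec, Matrix.vecMul_transpose]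
  rw [hv0, dotProduct_zero] at h1
  exact dotProduct_self_eq_zero.1 h1.symm

lemma gram_isUnit_det {C : Matrix (Fin n) (Fin m) ℝ} (hC : FullRank C) :
    IsUnit (gram C).det := isUnit_iff_ne_zero.2 (gram_det_ne_zero hC)

lemma gram_transpose (C : Matrix (Fin n) (Fin m) ℝ) : (gram C)ᵀ = gram C := by
  simp [gram, Matrix.transpose_mul]

lemma gram_inv_transpose (C : Matrix (Fin n) (Fin m) ℝ) : ((gram C)⁻¹)ᵀ = (gram C)⁻¹ := by
  rw [Matrix.transpose_nonsing_inv, gram_transpose]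

lemma proj_transpose (C : Matrix (Fin n) (Fin m) ℝ) : (proj C)ᵀ = proj C := by
  simp only [proj, Matrix.transpose_mul, Matrix.transpose_transpose, gram_inv_transpose,
    Matrix.mul_assoc]

lemma proj_mul_C {C : Matrix (Fin n) (Fin m) ℝ} (hC : FullRank C) :
    proj C * C = C := by
  have : (gram C)⁻¹ * gram C = 1 := Matrix.nonsing_inv_mul _ (gram_isUnit_det hC)
  calc proj C * C = C * ((gram C)⁻¹ * gram C) := by
        simp only [proj, gram, Matrix.mul_assoc]
    _ = C := by rw [this, Matrix.mul_one]

lemma Ct_mul_proj {C : Matrix (Fin n) (Fin m) ℝ} (hC : FullRank C) :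
    Cᵀ * proj C = Cᵀ := by
  have := congrArg Matrix.transpose (proj_mul_C hC)
  rwa [Matrix.transpose_mul, proj_transpose] at this

lemma proj_idem {C : Matrix (Fin n) (Fin m) ℝ} (hC : FullRank C) :
    proj C * proj C = proj C := by
  calc proj C * proj C = proj C * C * ((gram C)⁻¹ * Cᵀ) := by
        simp only [proj, Matrix.mul_assoc]
    _ = proj C := by rw [proj_mul_C hC]; simp only [proj, Matrix.mul_assoc]

lemma proj_diag_eq_sum_sq {C : Matrix (Fin n) (Fin m) ℝ} (hC : FullRank C) (q : Fin n) :
    proj C q q = ∑ k, (proj C k q) ^ 2 := by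
  conv_lhs => rw [← proj_idem hC]
  rw [Matrix.mul_apply]
  apply Finset.sum_congr rfl
  intro k _
  rw [sq]
  nth_rewrite 1 [← proj_transpose C]
  rw [Matrix.transpose_apply]

lemma proj_diag_nonneg {C : Matrix (Fin n) (Fin m) ℝ} (hC : FullRank C) (q : Fin n) :
    0 ≤ proj C q q := by
  rw [proj_diag_eq_sum_sq hC]
  exact Finset.sum_nonneg fun i _ => sq_nonneg _

lemma proj_diag_le_one {C : Matrix (Fin n) (Fin m) ℝ} (hC : FullRank C) (q : Fin n) :
    proj C q q ≤ 1 := by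
  have h1 : (proj C q q) ^ 2 ≤ ∑ k, (proj C k q) ^ 2 :=
    Finset.single_le_sum (f := fun k => (proj C k q) ^ 2)
      (fun i _ => sq_nonneg _) (Finset.mem_univ q)
  rw [← proj_diag_eq_sum_sq hC q] at h1
  nlinarith [proj_diag_nonneg hC q]

lemma row_eq_zero_of_proj_diag_eq_zero {C : Matrix (Fin n) (Fin m) ℝ} (hC : FullRank C)
    {q : Fin n} (h : proj C q q = 0) : ∀ j, C q j = 0 := by
  have hcol : ∀ k, proj C k q = 0 := by
    intro k
    have hsum : ∑ k, (proj C k q) ^ 2 = 0 := by rw [← proj_diag_eq_sum_sq hC, h]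
    have := (Finset.sum_eq_zero_iff_of_nonneg (fun i _ => sq_nonneg (proj C i q))).1 hsum
      k (Finset.mem_univ k)
    exact pow_eq_zero_iff (two_ne_zero) |>.1 this
  intro j
  have h2 : (Cᵀ * proj C) j q = Cᵀ j q := by rw [Ct_mul_proj hC]
  rw [Matrix.mul_apply] at h2
  simp only [hcol, mul_zero, Finset.sum_const_zero] at h2
  simpa [Matrix.transpose_apply] using h2.symm

lemma proj_diag_eq_zero_of_row_eq_zero {C : Matrix (Fin n) (Fin m) ℝ}
    {q : Fin n} (h : ∀ j, C q j = 0) : proj C q q = 0 := by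
  rw [proj, Matrix.mul_apply]
  apply Finset.sum_eq_zero
  intro k _
  rw [Matrix.mul_apply]
  simp [h]

lemma exists_mulVec_single_of_proj_diag_eq_one {C : Matrix (Fin n) (Fin m) ℝ} (hC : FullRank C)
    {p : Fin n} (h : proj C p p = 1) : ∃ x, C *ᵥ x = (Pi.single p 1 : Fin n → ℝ) := by
  have hcol : ∀ k, proj C k p = (Pi.single p 1 : Fin n → ℝ) k := by
    intro k
    have hsum : ∑ k, (proj C k p) ^ 2 = 1 := by rw [← proj_diag_eq_sum_sq hC, h]
    have hrest : ∑ k ∈ Finset.univ.erase p, (proj C k p) ^ 2 = 0 := by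
      have h2 : (proj C p p) ^ 2 + ∑ k ∈ Finset.univ.erase p, (proj C k p) ^ 2
          = ∑ k, (proj C k p) ^ 2 :=
        Finset.add_sum_erase Finset.univ (fun k => (proj C k p) ^ 2) (Finset.mem_univ p)
      rw [hsum, h, one_pow] at h2
      linarith
    rcases eq_or_ne k p with rfl | hk
    · simpa using h
    · have := (Finset.sum_eq_zero_iff_of_nonneg
        (fun i _ => sq_nonneg (proj C i p))).1 hrest k (Finset.mem_erase.2 ⟨hk, Finset.mem_univ k⟩)
      have hz := pow_eq_zero_iff (two_ne_zero) |>.1 this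
      rw [hz, Pi.single_apply, if_neg hk]
  refine ⟨((gram C)⁻¹ * Cᵀ) *ᵥ Pi.single p 1, ?_⟩
  rw [Matrix.mulVec_mulVec, ← Matrix.mul_assoc]
  have : (C * (gram C)⁻¹ * Cᵀ) *ᵥ Pi.single p 1 = fun k => proj C k p := by
    rw [show C * (gram C)⁻¹ * Cᵀ = proj C from rfl]
    simp [Matrix.mulVec_single]
    rfl
  rw [this]
  exact funext hcol

lemma one_sub_proj_diag_nonneg {C : Matrix (Fin n) (Fin m) ℝ} (hC : FullRank C) (p : Fin n) :
    0 ≤ 1 - proj C p p := by linarith [proj_diag_le_one hC p]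

lemma proj_mul_right (C : Matrix (Fin n) (Fin m) ℝ) (h : Matrix (Fin m) (Fin m) ℝ)
    (hh : IsUnit h.det) : proj (C * h) = proj C := by
  have hht : IsUnit hᵀ.det := by rwa [Matrix.det_transpose]
  have h1 : gram (C * h) = hᵀ * gram C * h := by
    simp only [gram, Matrix.transpose_mul, Matrix.mul_assoc]
  have h2 : (gram (C * h))⁻¹ = h⁻¹ * ((gram C)⁻¹ * (hᵀ)⁻¹) := by
    rw [h1, Matrix.mul_assoc, Matrix.mul_inv_rev, Matrix.mul_inv_rev, Matrix.mul_assoc]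
  show C * h * (gram (C * h))⁻¹ * (C * h)ᵀ = proj C
  rw [h2, Matrix.transpose_mul]
  have key : C * h * (h⁻¹ * ((gram C)⁻¹ * (hᵀ)⁻¹)) * (hᵀ * Cᵀ)
      = C * ((h * h⁻¹) * ((gram C)⁻¹ * (((hᵀ)⁻¹ * hᵀ) * Cᵀ))) := by
    simp only [Matrix.mul_assoc]
  rw [key, Matrix.mul_nonsing_inv h hh, Matrix.nonsing_inv_mul _ hht, Matrix.one_mul,
    Matrix.one_mul]
  simp only [proj, Matrix.mul_assoc]

lemma one_sub_proj_diag_le {C : Matrix (Fin n) (Fin m) ℝ} (hC : FullRank C) (p : Fin n)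
    (y : Fin m → ℝ) :
    1 - proj C p p ≤ ((Pi.single p 1 : Fin n → ℝ) - C *ᵥ y) ⬝ᵥ
      ((Pi.single p 1 : Fin n → ℝ) - C *ᵥ y) := by
  set e : Fin n → ℝ := (Pi.single p 1 : Fin n → ℝ) with he_def
  set w : Fin n → ℝ := C *ᵥ y with hw_def
  set u : Fin n → ℝ := fun k => proj C k p with hu_def
  have hee : e ⬝ᵥ e = 1 := by
    rw [he_def, single_dotProduct, Pi.single_eq_same, one_mul]
  have hew : e ⬝ᵥ w = w p := by rw [he_def, single_dotProduct, one_mul]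
  have hwe : w ⬝ᵥ e = w p := by rw [dotProduct_comm, hew]
  have huu : u ⬝ᵥ u = proj C p p := by
    rw [hu_def]
    rw [proj_diag_eq_sum_sq hC p]
    simp [dotProduct, sq]
  have huw : u ⬝ᵥ w = w p := by
    have hsym : ∀ k, proj C k p = proj C p k := by
      intro k
      nth_rewrite 1 [← proj_transpose C]
      rw [Matrix.transpose_apply]
    have h1 : u ⬝ᵥ w = (proj C *ᵥ w) p := by
      simp only [hu_def, dotProduct, Matrix.mulVec, dotProduct]
      exact Finset.sum_congr rfl fun k _ => by rw [hsym k]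
    rw [h1, hw_def, Matrix.mulVec_mulVec, proj_mul_C hC]
  have hwu : w ⬝ᵥ u = w p := by rw [dotProduct_comm, huw]
  have hpos : 0 ≤ (u - w) ⬝ᵥ (u - w) := dp_self_nonneg _
  have hexp1 : (u - w) ⬝ᵥ (u - w) = proj C p p - 2 * w p + w ⬝ᵥ w := by
    rw [sub_dotProduct, dotProduct_sub, dotProduct_sub, huu, huw, hwu]
    ring
  have hexp2 : (e - w) ⬝ᵥ (e - w) = 1 - 2 * w p + w ⬝ᵥ w := by
    rw [sub_dotProduct, dotProduct_sub, dotProduct_sub, hee, hew, hwe]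
    ring
  rw [hexp2]
  rw [hexp1] at hpos
  linarith

noncomputable def uE (k : ℝ) (p q : Fin n) : Matrix (Fin n) (Fin n) ℝ :=
  1 + k • Matrix.single p q 1

lemma E_mulVec (p q : Fin n) (v : Fin n → ℝ) :
    Matrix.single p q (1:ℝ) *ᵥ v = Pi.single p (v q) := by
  ext i
  simp only [Matrix.mulVec, dotProduct, Matrix.single, Matrix.of_apply]
  rcases eq_or_ne p i with rfl | hi
  · simp [Pi.single_eq_same, Finset.sum_ite_eq]
  · rw [Pi.single_apply, if_neg (Ne.symm hi)]
    apply Finset.sum_eq_zero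
    intro j _
    rw [if_neg (fun h => hi h.1), zero_mul]

lemma uE_mulVec (k : ℝ) (p q : Fin n) (v : Fin n → ℝ) :
    uE k p q *ᵥ v = v + (k * v q) • (Pi.single p 1 : Fin n → ℝ) := by
  rw [uE, Matrix.add_mulVec, Matrix.one_mulVec, Matrix.smul_mulVec, E_mulVec]
  congr 1
  ext i
  rw [Pi.smul_apply, Pi.smul_apply, Pi.single_apply, Pi.single_apply]
  by_cases h : i = p <;> simp [h, mul_comm]

lemma uE_row {p q : Fin n} (hpq : p ≠ q) (k : ℝ) (C : Matrix (Fin n) (Fin m) ℝ) (j : Fin m) :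
    (uE k p q * C) q j = C q j := by
  have hrow : ∀ l, uE k p q q l = (1 : Matrix (Fin n) (Fin n) ℝ) q l := by
    intro l
    have h0 : Matrix.single p q (1:ℝ) q l = 0 :=
      Matrix.single_apply_of_ne _ _ _ _ _ (fun h => hpq h.1)
    rw [uE, Matrix.add_apply, Matrix.smul_apply, h0, smul_zero, add_zero]
  rw [Matrix.mul_apply]
  have : ∑ l, uE k p q q l * C l j = ∑ l, (1 : Matrix (Fin n) (Fin n) ℝ) q l * C l j :=
    Finset.sum_congr rfl fun l _ => by rw [hrow l]
  rw [this, ← Matrix.mul_apply, Matrix.one_mul]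

lemma uE_mul_uE {p q : Fin n} (hpq : p ≠ q) (k : ℝ) :
    uE (-k) p q * uE k p q = 1 := by
  have hEE : Matrix.single p q (1:ℝ) * Matrix.single p q 1 = 0 :=
    Matrix.single_mul_single_of_ne (1:ℝ) p q p (Ne.symm hpq) 1
  have h1 : ((-k) • Matrix.single p q (1:ℝ)) * (k • Matrix.single p q 1) = 0 := by
    rw [Matrix.smul_mul, Matrix.mul_smul, hEE, smul_zero, smul_zero]
  rw [uE, uE, Matrix.add_mul, Matrix.one_mul, Matrix.mul_add, Matrix.mul_one, h1, add_zero,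
    neg_smul]
  abel

lemma fullRank_uE_mul {p q : Fin n} (hpq : p ≠ q) (k : ℝ) {C : Matrix (Fin n) (Fin m) ℝ}
    (hC : FullRank C) : FullRank (uE k p q * C) := by
  intro x hx
  apply hC
  have h1 : C *ᵥ x = (uE (-k) p q * (uE k p q * C)) *ᵥ x := by
    rw [← Matrix.mul_assoc, uE_mul_uE hpq, Matrix.one_mul]
  rw [h1, ← Matrix.mulVec_mulVec, hx, Matrix.mulVec_zero]

lemma decay_bound {p q : Fin n} (hpq : p ≠ q) {C : Matrix (Fin n) (Fin m) ℝ}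
    (hC : FullRank C) (x0 : Fin m → ℝ) (hx0 : (C *ᵥ x0) q = 1) (k : ℕ) (hk : 1 ≤ k) :
    proj (uE (k:ℝ) p q * C) q q * (1 - proj (uE (k:ℝ) p q * C) p p)
      ≤ ((C *ᵥ x0) ⬝ᵥ (C *ᵥ x0)) / (k:ℝ) ^ 2 := by
  set Ck := uE (k:ℝ) p q * C with hCk_def
  have hCk : FullRank Ck := fullRank_uE_mul hpq _ hC
  have hb1 : proj Ck q q ≤ 1 := proj_diag_le_one hCk q
  have hb0 : 0 ≤ proj Ck q q := proj_diag_nonneg hCk q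
  have hb2 : 0 ≤ 1 - proj Ck p p := one_sub_proj_diag_nonneg hCk p
  have hkne : (k:ℝ) ≠ 0 := Nat.cast_ne_zero.2 (by omega)
  set y : Fin m → ℝ := ((k:ℝ))⁻¹ • x0 with hy_def
  have hCky : Ck *ᵥ y = (k:ℝ)⁻¹ • (C *ᵥ x0) + Pi.single p 1 := by
    rw [hCk_def, ← Matrix.mulVec_mulVec, hy_def, Matrix.mulVec_smul, uE_mulVec]
    have h2 : (k:ℝ) * ((k:ℝ)⁻¹ • (C *ᵥ x0)) q = 1 := by
      rw [Pi.smul_apply, hx0, smul_eq_mul, mul_one, mul_inv_cancel₀ hkne]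
    rw [h2, one_smul]
  have hdot : ((Pi.single p 1 : Fin n → ℝ) - Ck *ᵥ y) ⬝ᵥ
      ((Pi.single p 1 : Fin n → ℝ) - Ck *ᵥ y) = ((C *ᵥ x0) ⬝ᵥ (C *ᵥ x0)) / (k:ℝ) ^ 2 := by
    rw [hCky]
    have h3 : (Pi.single p 1 : Fin n → ℝ) - ((k:ℝ)⁻¹ • (C *ᵥ x0) + Pi.single p 1)
        = -((k:ℝ)⁻¹ • (C *ᵥ x0)) := by abel
    rw [h3, neg_dotProduct, dotProduct_neg, neg_neg, smul_dotProduct,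
      dotProduct_smul, smul_eq_mul, smul_eq_mul]
    rw [pow_two, div_eq_mul_inv, mul_inv]
    ring
  have h4 : 1 - proj Ck p p ≤ ((C *ᵥ x0) ⬝ᵥ (C *ᵥ x0)) / (k:ℝ) ^ 2 := by
    rw [← hdot]; exact one_sub_proj_diag_le hCk p y
  calc proj Ck q q * (1 - proj Ck p p) ≤ 1 * (1 - proj Ck p p) :=
        mul_le_mul_of_nonneg_right hb1 hb2
    _ = 1 - proj Ck p p := one_mul _
    _ ≤ _ := h4

lemma sum_fin_truncate {N M : ℕ} (hm : M ≤ N) (f : Fin N → ℝ)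
    (hf : ∀ k : Fin N, M ≤ k.val → f k = 0) :
    ∑ k, f k = ∑ j : Fin M, f (Fin.castLE hm j) := by
  set F : ℕ → ℝ := fun i => if h : i < N then f ⟨i, h⟩ else 0 with hF
  have h1 : ∑ k, f k = ∑ i ∈ Finset.range N, F i := by
    rw [← Fin.sum_univ_eq_sum_range F N]
    apply Finset.sum_congr rfl
    intro k _
    rw [hF]
    simp
  have h2 : ∑ i ∈ Finset.range N, F i = ∑ i ∈ Finset.range M, F i := by
    symm
    apply Finset.sum_subset (Finset.range_subset_range.2 hm)
    intro x hx hnx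
    rw [Finset.mem_range] at hx
    rw [Finset.mem_range, not_lt] at hnx
    rw [hF]
    simp only [hx, dif_pos]
    exact hf ⟨x, hx⟩ hnx
  have h3 : ∑ i ∈ Finset.range M, F i = ∑ j : Fin M, f (Fin.castLE hm j) := by
    rw [← Fin.sum_univ_eq_sum_range F M]
    apply Finset.sum_congr rfl
    intro j _
    rw [hF]
    have hj : (j : ℕ) < N := lt_of_lt_of_le j.isLt hm
    simp only [hj, dif_pos]
    rfl
  rw [h1, h2, h3]

def cols (g : Matrix (Fin n) (Fin n) ℝ) (M : ℕ) (hM : M ≤ n) : Matrix (Fin n) (Fin M) ℝ :=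
  Matrix.of fun r j => g r (Fin.castLE hM j)

lemma fullRank_cols {g : Matrix (Fin n) (Fin n) ℝ} (hg : g.det ≠ 0) (M : ℕ) (hM : M ≤ n) :
    FullRank (cols g M hM) := by
  intro x hx
  set x' : Fin n → ℝ := fun k => if h : k.val < M then x ⟨k.val, h⟩ else 0 with hx'
  have h1 : g *ᵥ x' = 0 := by
    ext r
    show ∑ k, g r k * x' k = 0
    rw [sum_fin_truncate hM (fun k => g r k * x' k)
      (fun k hk => by simp [hx', not_lt.2 hk])]
    have : ∀ j : Fin M, g r (Fin.castLE hM j) * x' (Fin.castLE hM j)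
        = cols g M hM r j * x j := by
      intro j
      rw [hx']
      have hj : ((Fin.castLE hM j) : ℕ) < M := j.isLt
      simp only [hj, dif_pos]
      rfl
    rw [Finset.sum_congr rfl (fun j _ => this j)]
    exact congrFun hx r
  have h2 : x' = 0 := by
    by_contra hne
    exact hg (Matrix.exists_mulVec_eq_zero_iff.1 ⟨x', hne, h1⟩)
  ext j
  have := congrFun h2 (Fin.castLE hM j)
  rw [hx'] at this
  simp only [j.isLt, dif_pos] at this
  simpa using this

lemma cols_left_mul (A g : Matrix (Fin n) (Fin n) ℝ) (M : ℕ) (hM : M ≤ n) :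
    cols (A * g) M hM = A * cols g M hM := by
  ext r j
  simp [cols, Matrix.mul_apply]

def blockOf (h : Matrix (Fin n) (Fin n) ℝ) (M : ℕ) (hM : M ≤ n) : Matrix (Fin M) (Fin M) ℝ :=
  Matrix.of fun a b => h (Fin.castLE hM a) (Fin.castLE hM b)

lemma cols_mul_upper (g h : Matrix (Fin n) (Fin n) ℝ)
    (hh : ∀ i j : Fin n, j < i → h i j = 0) (M : ℕ) (hM : M ≤ n) :
    cols (g * h) M hM = cols g M hM * blockOf h M hM := by
  ext r j
  show (g * h) r (Fin.castLE hM j) = _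
  rw [Matrix.mul_apply]
  rw [sum_fin_truncate hM (fun k => g r k * h k (Fin.castLE hM j)) ?hv]
  case hv =>
    intro k hk
    have hlt : (Fin.castLE hM j) < k := by
      rw [Fin.lt_def]
      exact lt_of_lt_of_le j.isLt hk
    show g r k * h k (Fin.castLE hM j) = 0
    rw [hh k _ hlt, mul_zero]
  rw [Matrix.mul_apply]
  rfl

lemma blockOf_isUnit_det {h : Matrix (Fin n) (Fin n) ℝ}
    (hh : ∀ i j : Fin n, j < i → h i j = 0) (hdet : h.det = 1) (M : ℕ) (hM : M ≤ n) :
    IsUnit (blockOf h M hM).det := by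
  have htri : h.BlockTriangular id := fun i j hij => hh i j hij
  have hdiag : ∀ i : Fin n, h i i ≠ 0 := by
    have h1 : (1:ℝ) = ∏ i, h i i := by rw [← hdet, Matrix.det_of_upperTriangular htri]
    have h2 : ∀ i ∈ Finset.univ, h i i ≠ 0 :=
      Finset.prod_ne_zero_iff.1 (by rw [← h1]; exact one_ne_zero)
    exact fun i => h2 i (Finset.mem_univ i)
  have htri' : (blockOf h M hM).BlockTriangular id := by
    intro a b hab
    exact hh _ _ (by rw [Fin.lt_def]; exact hab)
  rw [isUnit_iff_ne_zero, Matrix.det_of_upperTriangular htri']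
  exact Finset.prod_ne_zero_iff.2 fun a _ => hdiag _

open Module in
lemma lower_entry_zero {g : Matrix (Fin n) (Fin n) ℝ} (hg : g.det ≠ 0)
    (H : ∀ p q : Fin n, p < q → ∀ (M : ℕ) (hM : M ≤ n),
      (∀ j' : Fin M, g q (Fin.castLE hM j') = 0) ∨
      (∃ x, cols g M hM *ᵥ x = (Pi.single p 1 : Fin n → ℝ))) :
    ∀ q j : Fin n, j < q → g q j = 0 := by
  intro q j hjq
  set M := j.val + 1 with hMdef
  have hM : M ≤ n := j.isLt
  by_cases hA : ∀ j' : Fin M, g q (Fin.castLE hM j') = 0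
  · have := hA ⟨j.val, Nat.lt_succ_self _⟩
    have hcast : Fin.castLE hM ⟨j.val, Nat.lt_succ_self _⟩ = j := by
      apply Fin.ext; rfl
    rwa [hcast] at this
  · have hB : ∀ p : Fin n, p < q → ∃ x, cols g M hM *ᵥ x = (Pi.single p 1 : Fin n → ℝ) :=
      fun p hp => (H p q hp M hM).resolve_left hA
    set U := LinearMap.range (Matrix.mulVecLin (cols g M hM)) with hUdef
    have hUfin : finrank ℝ U ≤ M := by
      have h1 := LinearMap.finrank_range_le (Matrix.mulVecLin (cols g M hM))
      rwa [Module.finrank_fin_fun] at h1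
    have hq_le : q.val ≤ n := le_of_lt q.isLt
    set b : Fin q.val → (Fin n → ℝ) := fun i => Pi.single (Fin.castLE hq_le i) 1 with hbdef
    have hbU : ∀ i, b i ∈ U := by
      intro i
      obtain ⟨x, hx⟩ := hB (Fin.castLE hq_le i) (by rw [Fin.lt_def]; exact i.isLt)
      exact ⟨x, by rw [Matrix.mulVecLin_apply, hx]⟩
    have hli : LinearIndependent ℝ b := by
      have h1 := (Pi.basisFun ℝ (Fin n)).linearIndependent
      have h2 := h1.comp (Fin.castLE hq_le) (Fin.strictMono_castLE hq_le).injective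
      have h3 : (⇑(Pi.basisFun ℝ (Fin n)) ∘ Fin.castLE hq_le) = b := by
        funext i
        simp [Function.comp, Pi.basisFun_apply, hbdef]
      rwa [h3] at h2
    set W := Submodule.span ℝ (Set.range b) with hWdef
    have hWU : W ≤ U := Submodule.span_le.2 (by rintro _ ⟨i, rfl⟩; exact hbU i)
    have hWrank : finrank ℝ W = q.val := by
      rw [hWdef, finrank_span_eq_card hli, Fintype.card_fin]
    have hqU : q.val ≤ finrank ℝ U := by
      rw [← hWrank]; exact Submodule.finrank_mono hWU
    have hMq : M ≤ q.val := Nat.succ_le.2 hjq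
    have hUW : U = W := by
      symm
      apply Submodule.eq_of_le_of_finrank_le hWU
      rw [hWrank]
      omega
    have hcol : (fun r => g r j) ∈ U := by
      refine ⟨Pi.single ⟨j.val, Nat.lt_succ_self _⟩ 1, ?_⟩
      rw [Matrix.mulVecLin_apply, Matrix.mulVec_single]
      funext r
      show cols g M hM r ⟨j.val, _⟩ * 1 = g r j
      rw [mul_one]
      rfl
    rw [hUW] at hcol
    have hker : W ≤ LinearMap.ker (LinearMap.proj q : (Fin n → ℝ) →ₗ[ℝ] ℝ) := by
      apply Submodule.span_le.2
      rintro _ ⟨i, rfl⟩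
      have hne : q ≠ Fin.castLE hq_le i := by
        symm at *
        exact ne_of_lt (by rw [Fin.lt_def]; exact i.isLt)
      simp only [SetLike.mem_coe, LinearMap.mem_ker]
      show b i q = 0
      rw [hbdef]
      exact Pi.single_eq_of_ne hne 1
    have := hker hcol
    rw [LinearMap.mem_ker] at this
    exact this

/-! ### SL_n level -/

lemma one_add_std_below_diag {R : Type} [CommRing R] {p q : Fin n} (hpq : p < q)
    (i j : Fin n) (hij : j < i) : (1 + Matrix.single p q (1:R)) i j = 0 := by
  rw [Matrix.add_apply, Matrix.one_apply_ne (ne_of_lt hij).symm,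
    Matrix.single_apply_of_ne _ _ _ _ _ ?hne, add_zero]
  case hne =>
    rintro ⟨rfl, rfl⟩
    exact absurd hpq (lt_asymm hij)

lemma one_add_std_diag {R : Type} [CommRing R] {p q : Fin n} (hpq : p ≠ q) (i : Fin n) :
    (1 + Matrix.single p q (1:R)) i i = 1 := by
  rw [Matrix.add_apply, Matrix.one_apply_eq,
    Matrix.single_apply_of_ne _ _ _ _ _ (fun h => hpq (h.1.trans h.2.symm)), add_zero]

lemma det_one_add_std {R : Type} [CommRing R] {p q : Fin n} (hpq : p < q) :
    (1 + Matrix.single p q (1:R)).det = 1 := by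
  have htri : (1 + Matrix.single p q (1:R)).BlockTriangular id :=
    fun i j hij => one_add_std_below_diag hpq i j hij
  rw [Matrix.det_of_upperTriangular htri]
  rw [Finset.prod_congr rfl (fun i _ => one_add_std_diag (ne_of_lt hpq) i)]
  simp

/-- The elementary unipotent element of `SL_n(ℤ)`. -/
def tZ {n : ℕ} {p q : Fin n} (hpq : p < q) : SpecialLinearGroup (Fin n) ℤ :=
  ⟨1 + Matrix.single p q 1, det_one_add_std hpq⟩

lemma tZ_mem {p q : Fin n} (hpq : p < q) : tZ hpq ∈ upperTriangularSubgroup n ℤ :=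
  fun i j hij => one_add_std_below_diag hpq i j hij

lemma uE_add {p q : Fin n} (hpq : p ≠ q) (k l : ℝ) :
    uE k p q * uE l p q = uE (k + l) p q := by
  have hEE : Matrix.single p q (1:ℝ) * Matrix.single p q 1 = 0 :=
    Matrix.single_mul_single_of_ne (1:ℝ) p q p (Ne.symm hpq) 1
  have h1 : (k • Matrix.single p q (1:ℝ)) * (l • Matrix.single p q 1) = 0 := by
    rw [Matrix.smul_mul, Matrix.mul_smul, hEE, smul_zero, smul_zero]
  rw [uE, uE, uE, Matrix.add_mul, Matrix.one_mul, Matrix.mul_add, Matrix.mul_one, h1, add_zero,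
    add_smul]
  abel

lemma coe_slZtoR_tZ {p q : Fin n} (hpq : p < q) :
    ((slZtoR n (tZ hpq)) : Matrix (Fin n) (Fin n) ℝ) = uE 1 p q := by
  have h1 : ((slZtoR n (tZ hpq)) : Matrix (Fin n) (Fin n) ℝ)
      = ((tZ hpq : Matrix (Fin n) (Fin n) ℤ)).map (Int.castRingHom ℝ) :=
    Matrix.SpecialLinearGroup.map_apply_coe _ _
  rw [h1]
  ext i j
  show (((1 + Matrix.single p q 1 : Matrix (Fin n) (Fin n) ℤ)) i j : ℝ) = uE 1 p q i j
  rw [uE, one_smul]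
  rw [Matrix.add_apply, Matrix.add_apply]
  push_cast
  congr 1
  · rw [Matrix.one_apply, Matrix.one_apply]
    split <;> simp
  · rw [Matrix.single, Matrix.single, Matrix.of_apply, Matrix.of_apply]
    split <;> simp

lemma coe_slZtoR_tZ_pow {p q : Fin n} (hpq : p < q) (k : ℕ) :
    ((slZtoR n (tZ hpq ^ k)) : Matrix (Fin n) (Fin n) ℝ) = uE (k : ℝ) p q := by
  induction k with
  | zero =>
    rw [pow_zero, _root_.map_one]
    show ((1 : SpecialLinearGroup (Fin n) ℝ) : Matrix (Fin n) (Fin n) ℝ) = _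
    rw [Matrix.SpecialLinearGroup.coe_one, uE, Nat.cast_zero, zero_smul, add_zero]
  | succ k ih =>
    rw [pow_succ, _root_.map_mul]
    rw [Matrix.SpecialLinearGroup.coe_mul, ih, coe_slZtoR_tZ hpq, uE_add (ne_of_lt hpq)]
    push_cast
    rfl

/-! ### The function on the quotient -/

/-- The quantity `d` on matrices. -/
noncomputable def dmat (p q : Fin n) (M : ℕ) (hM : M ≤ n) (g : Matrix (Fin n) (Fin n) ℝ) : ℝ :=
  proj (cols g M hM) q q * (1 - proj (cols g M hM) p p)

lemma dmat_right_invariant (p q : Fin n) (M : ℕ) (hM : M ≤ n)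
    (g h : Matrix (Fin n) (Fin n) ℝ) (hup : ∀ i j : Fin n, j < i → h i j = 0)
    (hdet : h.det = 1) : dmat p q M hM (g * h) = dmat p q M hM g := by
  unfold dmat
  rw [cols_mul_upper g h hup M hM, proj_mul_right _ _ (blockOf_isUnit_det hup hdet M hM)]

lemma dmat_nonneg (p q : Fin n) (M : ℕ) (hM : M ≤ n) {g : Matrix (Fin n) (Fin n) ℝ}
    (hg : g.det ≠ 0) : 0 ≤ dmat p q M hM g :=
  mul_nonneg (proj_diag_nonneg (fullRank_cols hg M hM) q)
    (one_sub_proj_diag_nonneg (fullRank_cols hg M hM) p)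

lemma dmat_le_one (p q : Fin n) (M : ℕ) (hM : M ≤ n) {g : Matrix (Fin n) (Fin n) ℝ}
    (hg : g.det ≠ 0) : dmat p q M hM g ≤ 1 := by
  have hfr := fullRank_cols hg M hM
  have h1 := proj_diag_le_one hfr q
  have h2 := proj_diag_nonneg hfr q
  have h3 := proj_diag_nonneg hfr p
  have h4 := proj_diag_le_one hfr p
  unfold dmat
  nlinarith

lemma det_coe_ne_zero (g : SpecialLinearGroup (Fin n) ℝ) :
    ((g : Matrix (Fin n) (Fin n) ℝ)).det ≠ 0 := by
  rw [g.prop]; exact one_ne_zero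

/-- The function on the quotient. -/
noncomputable def dbar (p q : Fin n) (M : ℕ) (hM : M ≤ n)
    (x : SpecialLinearGroup (Fin n) ℝ ⧸ upperTriangularSubgroup n ℝ) : ℝ :=
  Quotient.liftOn' x (fun g => dmat p q M hM (g : Matrix (Fin n) (Fin n) ℝ)) (by
    intro a b hab
    have hmem : a⁻¹ * b ∈ upperTriangularSubgroup n ℝ := QuotientGroup.leftRel_apply.1 hab
    have hb : b = a * (a⁻¹ * b) := by group
    have hcoe : (b : Matrix (Fin n) (Fin n) ℝ)
        = (a : Matrix (Fin n) (Fin n) ℝ) * ((a⁻¹ * b : SpecialLinearGroup (Fin n) ℝ) :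
          Matrix (Fin n) (Fin n) ℝ) := by
      rw [← Matrix.SpecialLinearGroup.coe_mul, ← hb]
    show dmat p q M hM _ = dmat p q M hM _
    rw [hcoe, dmat_right_invariant p q M hM _ _ (fun i j hij => hmem i j hij)
      ((a⁻¹ * b : SpecialLinearGroup (Fin n) ℝ).prop)])

lemma dbar_mk (p q : Fin n) (M : ℕ) (hM : M ≤ n) (g : SpecialLinearGroup (Fin n) ℝ) :
    dbar p q M hM (QuotientGroup.mk g) = dmat p q M hM (g : Matrix (Fin n) (Fin n) ℝ) := rfl

/-! ### Continuity -/

lemma continuous_coe_SL :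
    Continuous (fun g : SpecialLinearGroup (Fin n) ℝ => (g : Matrix (Fin n) (Fin n) ℝ)) :=
  continuous_subtype_val

lemma continuous_proj_entry (M : ℕ) (hM : M ≤ n) (a b : Fin n) :
    Continuous (fun g : SpecialLinearGroup (Fin n) ℝ =>
      proj (cols (g : Matrix (Fin n) (Fin n) ℝ) M hM) a b) := by
  have hform : ∀ (C : Matrix (Fin n) (Fin M) ℝ),
      proj C a b = ((gram C).det)⁻¹ * ((C * (gram C).adjugate * Cᵀ) a b) := by
    intro C
    rw [proj, Matrix.inv_def, Ring.inverse_eq_inv, Matrix.mul_smul, Matrix.smul_mul,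
      Matrix.smul_apply, smul_eq_mul]
  have hcols : Continuous (fun g : SpecialLinearGroup (Fin n) ℝ =>
      cols (g : Matrix (Fin n) (Fin n) ℝ) M hM) :=
    continuous_matrix fun r j => continuous_coe_SL.matrix_elem r _
  have hgram : Continuous (fun g : SpecialLinearGroup (Fin n) ℝ =>
      gram (cols (g : Matrix (Fin n) (Fin n) ℝ) M hM)) :=
    hcols.matrix_transpose.matrix_mul hcols
  have hdet : Continuous (fun g : SpecialLinearGroup (Fin n) ℝ =>
      (gram (cols (g : Matrix (Fin n) (Fin n) ℝ) M hM)).det) := hgram.matrix_det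
  have hdetne : ∀ g : SpecialLinearGroup (Fin n) ℝ,
      (gram (cols (g : Matrix (Fin n) (Fin n) ℝ) M hM)).det ≠ 0 :=
    fun g => gram_det_ne_zero (fullRank_cols (det_coe_ne_zero g) M hM)
  have hnum : Continuous (fun g : SpecialLinearGroup (Fin n) ℝ =>
      ((cols (g : Matrix (Fin n) (Fin n) ℝ) M hM) *
        (gram (cols (g : Matrix (Fin n) (Fin n) ℝ) M hM)).adjugate *
        (cols (g : Matrix (Fin n) (Fin n) ℝ) M hM)ᵀ) a b) :=
    ((hcols.matrix_mul hgram.matrix_adjugate).matrix_mul hcols.matrix_transpose).matrix_elem a b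
  have := ((hdet.inv₀ hdetne).mul hnum)
  simpa only [Pi.mul_def, Pi.inv_def, ← hform] using this

lemma continuous_dmat_SL (p q : Fin n) (M : ℕ) (hM : M ≤ n) :
    Continuous (fun g : SpecialLinearGroup (Fin n) ℝ =>
      dmat p q M hM (g : Matrix (Fin n) (Fin n) ℝ)) := by
  unfold dmat
  exact (continuous_proj_entry M hM q q).mul
    (continuous_const.sub (continuous_proj_entry M hM p p))

lemma continuous_dbar (p q : Fin n) (M : ℕ) (hM : M ≤ n) :
    Continuous (dbar p q M hM) :=
  (continuous_dmat_SL p q M hM).quotient_liftOn' _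

lemma continuous_mul_left_SL (c : SpecialLinearGroup (Fin n) ℝ) :
    Continuous (fun g : SpecialLinearGroup (Fin n) ℝ => c * g) := by
  apply continuous_induced_rng.2
  have h1 : (Subtype.val ∘ fun g : SpecialLinearGroup (Fin n) ℝ => c * g)
      = fun g : SpecialLinearGroup (Fin n) ℝ =>
        (c : Matrix (Fin n) (Fin n) ℝ) * (g : Matrix (Fin n) (Fin n) ℝ) :=
    funext fun g => Matrix.SpecialLinearGroup.coe_mul c g
  erw [h1]
  exact continuous_const.matrix_mul continuous_subtype_val

lemma continuous_smul_Q (c : SpecialLinearGroup (Fin n) ℝ) :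
    Continuous (fun x : SpecialLinearGroup (Fin n) ℝ ⧸ upperTriangularSubgroup n ℝ => c • x) := by
  apply (isQuotientMap_quotient_mk').continuous_iff.2
  show Continuous fun g : SpecialLinearGroup (Fin n) ℝ => QuotientGroup.mk (c * g)
  exact continuous_quotient_mk'.comp (continuous_mul_left_SL c)

/-! ### Pointwise decay along the orbit -/

lemma tendsto_dbar_smul (p q : Fin n) (hpq : p < q) (M : ℕ) (hM : M ≤ n)
    (x : SpecialLinearGroup (Fin n) ℝ ⧸ upperTriangularSubgroup n ℝ) :
    Filter.Tendsto (fun k : ℕ => dbar p q M hM (slZtoR n (tZ hpq ^ k) • x))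
      Filter.atTop (nhds 0) := by
  obtain ⟨g, rfl⟩ := QuotientGroup.mk_surjective x
  have hval : ∀ k : ℕ, dbar p q M hM (slZtoR n (tZ hpq ^ k) • QuotientGroup.mk g)
      = proj (uE (k:ℝ) p q * cols (g : Matrix (Fin n) (Fin n) ℝ) M hM) q q *
        (1 - proj (uE (k:ℝ) p q * cols (g : Matrix (Fin n) (Fin n) ℝ) M hM) p p) := by
    intro k
    have h1 : slZtoR n (tZ hpq ^ k) • (QuotientGroup.mk g :
        SpecialLinearGroup (Fin n) ℝ ⧸ upperTriangularSubgroup n ℝ)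
        = QuotientGroup.mk (slZtoR n (tZ hpq ^ k) * g) := rfl
    rw [h1, dbar_mk]
    unfold dmat
    rw [Matrix.SpecialLinearGroup.coe_mul, coe_slZtoR_tZ_pow hpq, cols_left_mul]
  have hfrC : FullRank (cols (g : Matrix (Fin n) (Fin n) ℝ) M hM) :=
    fullRank_cols (det_coe_ne_zero g) M hM
  set C := cols (g : Matrix (Fin n) (Fin n) ℝ) M hM with hCdef
  by_cases hrow : ∀ j : Fin M, C q j = 0
  · have hz : ∀ k : ℕ, dbar p q M hM (slZtoR n (tZ hpq ^ k) • QuotientGroup.mk g) = 0 := by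
      intro k
      rw [hval k]
      have hrow' : ∀ j : Fin M, (uE (k:ℝ) p q * C) q j = 0 := by
        intro j
        rw [uE_row (ne_of_lt hpq)]
        exact hrow j
      rw [proj_diag_eq_zero_of_row_eq_zero hrow', zero_mul]
    simp only [hz]
    exact tendsto_const_nhds
  · push_neg at hrow
    obtain ⟨j0, hj0⟩ := hrow
    set x0 : Fin M → ℝ := (C q j0)⁻¹ • (Pi.single j0 1 : Fin M → ℝ) with hx0def
    have hx0 : (C *ᵥ x0) q = 1 := by
      rw [hx0def, Matrix.mulVec_smul, Matrix.mulVec_single]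
      show (C q j0)⁻¹ • (C q j0 * 1) = 1
      rw [mul_one, smul_eq_mul, inv_mul_cancel₀ hj0]
    have hnn : ∀ k : ℕ, 0 ≤ dbar p q M hM (slZtoR n (tZ hpq ^ k) • QuotientGroup.mk g) := by
      intro k
      rw [hval k]
      have hfr' : FullRank (uE (k:ℝ) p q * C) := fullRank_uE_mul (ne_of_lt hpq) _ hfrC
      exact mul_nonneg (proj_diag_nonneg hfr' q) (one_sub_proj_diag_nonneg hfr' p)
    have hb : ∀ k : ℕ, 1 ≤ k → dbar p q M hM (slZtoR n (tZ hpq ^ k) • QuotientGroup.mk g)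
        ≤ ((C *ᵥ x0) ⬝ᵥ (C *ᵥ x0)) / (k:ℝ) ^ 2 := by
      intro k hk
      rw [hval k]
      exact decay_bound (ne_of_lt hpq) hfrC x0 hx0 k hk
    apply squeeze_zero' (Filter.Eventually.of_forall hnn) (Filter.eventually_atTop.2 ⟨1, hb⟩)
    have h1 : Filter.Tendsto (fun k : ℕ => ((k:ℝ)) ^ 2) Filter.atTop Filter.atTop :=
      (Filter.tendsto_pow_atTop two_ne_zero).comp tendsto_natCast_atTop_atTop
    exact Filter.Tendsto.div_atTop tendsto_const_nhds h1

/-! ### Identifying the zero set -/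

lemma mk_eq_one_of_dbar_zero (g : SpecialLinearGroup (Fin n) ℝ)
    (h : ∀ p q : Fin n, p < q → ∀ (M : ℕ) (hM : M ≤ n),
      dbar p q M hM (QuotientGroup.mk g) = 0) :
    (QuotientGroup.mk g : SpecialLinearGroup (Fin n) ℝ ⧸ upperTriangularSubgroup n ℝ)
      = QuotientGroup.mk 1 := by
  have hg : ∀ i j : Fin n, j < i → (g : Matrix (Fin n) (Fin n) ℝ) i j = 0 := by
    apply lower_entry_zero (det_coe_ne_zero g)
    intro p q hpq M hM
    have hd := h p q hpq M hM
    rw [dbar_mk] at hd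
    unfold dmat at hd
    have hfr : FullRank (cols (g : Matrix (Fin n) (Fin n) ℝ) M hM) :=
      fullRank_cols (det_coe_ne_zero g) M hM
    rcases mul_eq_zero.1 hd with h1 | h2
    · left
      intro j'
      exact row_eq_zero_of_proj_diag_eq_zero hfr h1 j'
    · right
      have hone : proj (cols (g : Matrix (Fin n) (Fin n) ℝ) M hM) p p = 1 := by linarith
      exact exists_mulVec_single_of_proj_diag_eq_one hfr hone
  have hmem : g ∈ upperTriangularSubgroup n ℝ := fun i j hij => hg i j hij
  exact QuotientGroup.eq.2 (by
    simpa using (upperTriangularSubgroup n ℝ).inv_mem hmem)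

end SLP


/-- Every Borel probability measure on `SL_n(ℝ)/P` invariant under the
subgroup `Λ` of upper triangular matrices of `SL_n(ℤ)` (acting by left multiplication via the
inclusion `SL_n(ℤ) ⊆ SL_n(ℝ)`) is the Dirac measure at the identity coset `[P]`. -/
theorem lambda_invariant_measure_eq_dirac (n : ℕ) (hn : 2 ≤ n) :
    ∀ μ : MeasureTheory.Measure
        (SpecialLinearGroup (Fin n) ℝ ⧸ upperTriangularSubgroup n ℝ),
      MeasureTheory.IsProbabilityMeasure μ →
      (∀ t : SpecialLinearGroup (Fin n) ℤ, t ∈ upperTriangularSubgroup n ℤ →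
        μ.map (fun x => slZtoR n t • x) = μ) →
      μ = MeasureTheory.Measure.dirac
        (QuotientGroup.mk (1 : SpecialLinearGroup (Fin n) ℝ)) := by
  intro μ hprob hinv
  classical
  have key : ∀ (p q : Fin n), p < q → ∀ (M : ℕ) (hM : M ≤ n),
      ∀ᵐ x ∂μ, SLP.dbar p q M hM x = 0 := by
    intro p q hpq M hM
    have hfc : Continuous (SLP.dbar p q M hM) := SLP.continuous_dbar p q M hM
    have hfm : MeasureTheory.AEStronglyMeasurable (SLP.dbar p q M hM) μ :=
      hfc.aestronglyMeasurable
    have hbound : ∀ x, 0 ≤ SLP.dbar p q M hM x ∧ SLP.dbar p q M hM x ≤ 1 := by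
      intro x
      obtain ⟨g, rfl⟩ := QuotientGroup.mk_surjective x
      rw [SLP.dbar_mk]
      exact ⟨SLP.dmat_nonneg p q M hM (SLP.det_coe_ne_zero g),
        SLP.dmat_le_one p q M hM (SLP.det_coe_ne_zero g)⟩
    have hint : MeasureTheory.Integrable (SLP.dbar p q M hM) μ := by
      apply MeasureTheory.Integrable.mono' (MeasureTheory.integrable_const (1:ℝ)) hfm
      apply Filter.Eventually.of_forall
      intro x
      rw [Real.norm_eq_abs, abs_of_nonneg (hbound x).1]
      exact (hbound x).2
    have hTcont : ∀ k : ℕ, Continuous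
        (fun x : SpecialLinearGroup (Fin n) ℝ ⧸ upperTriangularSubgroup n ℝ =>
          slZtoR n (SLP.tZ hpq ^ k) • x) :=
      fun k => SLP.continuous_smul_Q _
    have hmap : ∀ k : ℕ, μ.map (fun x => slZtoR n (SLP.tZ hpq ^ k) • x) = μ :=
      fun k => hinv _ (pow_mem (SLP.tZ_mem hpq) k)
    have hIk : ∀ k : ℕ,
        ∫ x, SLP.dbar p q M hM (slZtoR n (SLP.tZ hpq ^ k) • x) ∂μ
          = ∫ x, SLP.dbar p q M hM x ∂μ := by
      intro k
      have h2 := MeasureTheory.integral_map (μ := μ)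
        (φ := fun x => slZtoR n (SLP.tZ hpq ^ k) • x)
        ((hTcont k).measurable.aemeasurable)
        (f := SLP.dbar p q M hM) (by rw [hmap k]; exact hfm)
      rw [hmap k] at h2
      exact h2.symm
    have htend : Filter.Tendsto
        (fun k : ℕ => ∫ x, SLP.dbar p q M hM (slZtoR n (SLP.tZ hpq ^ k) • x) ∂μ)
        Filter.atTop (nhds (∫ _, (0:ℝ) ∂μ)) := by
      apply MeasureTheory.tendsto_integral_of_dominated_convergence (bound := fun _ => (1:ℝ))
      · intro k
        exact (hfc.comp (hTcont k)).aestronglyMeasurable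
      · exact MeasureTheory.integrable_const 1
      · intro k
        apply Filter.Eventually.of_forall
        intro x
        rw [Real.norm_eq_abs, abs_of_nonneg (hbound _).1]
        exact (hbound _).2
      · apply Filter.Eventually.of_forall
        intro x
        exact SLP.tendsto_dbar_smul p q hpq M hM x
    rw [MeasureTheory.integral_zero] at htend
    rw [funext hIk] at htend
    have hzero : ∫ x, SLP.dbar p q M hM x ∂μ = 0 :=
      tendsto_nhds_unique tendsto_const_nhds htend
    exact (MeasureTheory.integral_eq_zero_iff_of_nonneg (fun x => (hbound x).1) hint).1 hzero
  have hae : ∀ᵐ x ∂μ, ∀ (p q : Fin n) (m : Fin (n+1)), p < q →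
      SLP.dbar p q m.val (Nat.lt_succ_iff.mp m.isLt) x = 0 := by
    rw [MeasureTheory.ae_all_iff]; intro p
    rw [MeasureTheory.ae_all_iff]; intro q
    rw [MeasureTheory.ae_all_iff]; intro m
    by_cases hpq : p < q
    · exact (key p q hpq m.val _).mono fun x hx _ => hx
    · exact MeasureTheory.ae_of_all _ fun x h => absurd h hpq
  have hae2 : ∀ᵐ x ∂μ,
      x = QuotientGroup.mk (1 : SpecialLinearGroup (Fin n) ℝ) := by
    apply hae.mono
    intro x hx
    obtain ⟨g, rfl⟩ := QuotientGroup.mk_surjective x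
    apply SLP.mk_eq_one_of_dbar_zero g
    intro p q hpq M hM
    exact hx p q ⟨M, Nat.lt_succ_iff.2 hM⟩ hpq
  have hnull : μ {x | ¬ x = QuotientGroup.mk (1 : SpecialLinearGroup (Fin n) ℝ)} = 0 :=
    hae2
  ext s hs
  rw [MeasureTheory.Measure.dirac_apply' _ hs]
  by_cases hmem : (QuotientGroup.mk (1 : SpecialLinearGroup (Fin n) ℝ) :
      SpecialLinearGroup (Fin n) ℝ ⧸ upperTriangularSubgroup n ℝ) ∈ s
  · rw [Set.indicator_of_mem hmem]
    have hcompl : μ sᶜ = 0 := by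
      apply MeasureTheory.measure_mono_null _ hnull
      intro x hx hx1
      exact hx (hx1 ▸ hmem)
    have hadd := MeasureTheory.measure_add_measure_compl (μ := μ) hs
    rw [hcompl, add_zero, MeasureTheory.measure_univ] at hadd
    rw [hadd]
    rfl
  · rw [Set.indicator_of_notMem hmem]
    apply MeasureTheory.measure_mono_null _ hnull
    intro x hx hx1
    exact hmem (hx1 ▸ hx)
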